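/- For every k ≥ 1: Σ_{i=1}^{∞} p_k^S(i−1, ∞) = (1/2) Σ_{i=1}^{4k} p_k^S(i−1, 4k−i); in particular the left-hand series has only finitely many nonzero terms, since p_k^S(i−1, ∞) = 0 for i > 2k. -/

import Mathlib

open MeasureTheory ENNReal
open scoped Classical

/-- A configuration: a coloring of `ℤ` with the two colors coded by `Bool`. -/
abbrev Config := ℤ → Bool

/-- A site `x` is unstable in `η` iff it lies in a monochromatic chain of length (at least) 3,
i.e. there is `y ∈ {x-2, x-1, x}` with `η y = η (y+1) = η (y+2)`. Spelled out explicitly. -/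
def Unstable (η : Config) (x : ℤ) : Prop :=
  (η (x - 2) = η (x - 1) ∧ η (x - 1) = η x) ∨
  (η (x - 1) = η x ∧ η x = η (x + 1)) ∨
  (η x = η (x + 1) ∧ η (x + 1) = η (x + 2))

instance (η : Config) (x : ℤ) : Decidable (Unstable η x) := by
  unfold Unstable; infer_instance

/-- One step of the dynamics: stable sites keep their color, unstable ones are recolored
using the fresh colors `c`. -/
def update (η : Config) (c : ℤ → Bool) : Config :=
  fun x => if Unstable η x then c x else η x

/-- `evolve ω η k = R^k(η)`: the configuration after `k` steps, where the simultaneous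
recoloring at step `j` uses the fresh colors `ω j`. -/
def evolve (ω : ℕ → ℤ → Bool) (η : Config) : ℕ → Config
  | 0 => η
  | k + 1 => update (evolve ω η k) (ω k)

/-- `μ` makes the coordinates of the coin field i.i.d. uniform on the two colors:
every finite cylinder event has probability `(1/2)^(number of coordinates)`. -/
def IIDCoins (μ : Measure (ℕ → ℤ → Bool)) : Prop :=
  ∀ (S : Finset (ℕ × ℤ)) (f : ℕ × ℤ → Bool),
    μ {ω | ∀ p ∈ S, ω p.1 p.2 = f p} = (1 / 2 : ℝ≥0∞) ^ S.card

/-- The number of unstable sites of a configuration. -/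
noncomputable def numUnstable (η : Config) : ℕ∞ := {x : ℤ | Unstable η x}.encard

/-- `p_k^I`: sup over configurations `η` with site `0` unstable of `P(σ_{R^k(η)}(0) = 0)`. -/
noncomputable def pI (μ : Measure (ℕ → ℤ → Bool)) (k : ℕ) : ℝ≥0∞ :=
  ⨆ (η : Config) (_ : Unstable η 0), μ {ω | Unstable (evolve ω η k) 0}

/-- `p_k^{III}`: sup over configurations `η` with sites `-1, 0, 1` all unstable of
`P(σ_{R^k(η)}(0) = 0)`. -/
noncomputable def pIII (μ : Measure (ℕ → ℤ → Bool)) (k : ℕ) : ℝ≥0∞ :=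
  ⨆ (η : Config) (_ : Unstable η (-1) ∧ Unstable η 0 ∧ Unstable η 1),
    μ {ω | Unstable (evolve ω η k) 0}

/-- The conditioning event of `p_k^S(n,m)` (at site `0`): all sites `i` with `-n ≤ i ≤ m`
are stable, and the boundary sites `-n-1` (if `n` is finite) and `m+1` (if `m` is finite)
are unstable.  The inequality `-n ≤ i ≤ m` in `ℕ∞` is coded using `Int.toNat`. -/
def SWindow (η : Config) (n m : ℕ∞) : Prop :=
  (∀ i : ℤ, (((-i).toNat : ℕ∞) ≤ n) → ((i.toNat : ℕ∞) ≤ m) → ¬ Unstable η i) ∧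
  (∀ nn : ℕ, n = (nn : ℕ∞) → Unstable η (-(nn : ℤ) - 1)) ∧
  (∀ mm : ℕ, m = (mm : ℕ∞) → Unstable η ((mm : ℤ) + 1))

/-- `p_k^S(n,m)` for `n, m ∈ ℕ ∪ {∞}`: sup over configurations `η` satisfying the stable-window
condition of `P(σ_{R^k(η)}(0) = 0)`. -/
noncomputable def pS (μ : Measure (ℕ → ℤ → Bool)) (k : ℕ) (n m : ℕ∞) : ℝ≥0∞ :=
  ⨆ (η : Config) (_ : SWindow η n m), μ {ω | Unstable (evolve ω η k) 0}

-- combinatorial lemmas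
lemma unstable_congr {ξ ξ' : Config} {x : ℤ} (h : ∀ y, x-2 ≤ y → y ≤ x+2 → ξ y = ξ' y) :
    Unstable ξ x ↔ Unstable ξ' x := by
  unfold Unstable
  rw [h (x-2) (by omega) (by omega), h (x-1) (by omega) (by omega),
    h x (by omega) (by omega), h (x+1) (by omega) (by omega), h (x+2) (by omega) (by omega)]

lemma update_agree {ξ ξ' : Config} {c : ℤ → Bool} {M : ℤ} (h : ∀ x ≤ M, ξ x = ξ' x) :
    ∀ x ≤ M - 2, update ξ c x = update ξ' c x := by
  intro x hx
  have hU : Unstable ξ x ↔ Unstable ξ' x :=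
    unstable_congr (fun y hy1 hy2 => h y (by omega))
  unfold update
  by_cases hu : Unstable ξ x
  · rw [if_pos hu, if_pos (hU.mp hu)]
  · rw [if_neg hu, if_neg (fun h' => hu (hU.mpr h')), h x (by omega)]

lemma update_agree_stable {ξ ξ' : Config} {c : ℤ → Bool} {M : ℤ} (h : ∀ x ≤ M, ξ x = ξ' x)
    (s1 : ¬ Unstable ξ (M-1)) (s2 : ¬ Unstable ξ M)
    (s1' : ¬ Unstable ξ' (M-1)) (s2' : ¬ Unstable ξ' M) :
    ∀ x ≤ M, update ξ c x = update ξ' c x := by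
  intro x hx
  rcases lt_or_ge x (M - 1) with hlt | hge
  · exact update_agree h x (by omega)
  · unfold update
    rcases eq_or_lt_of_le hge with heq | hlt2
    · rw [if_neg (heq ▸ s1), if_neg (heq ▸ s1'), h x hx]
    · have : x = M := by omega
      subst this
      rw [if_neg s2, if_neg s2', h x le_rfl]

lemma evolve_agree {η η' : Config} {ω : ℕ → ℤ → Bool} {M : ℤ} (h : ∀ x ≤ M, η x = η' x)
    (s1 : ¬ Unstable η (M-1)) (s2 : ¬ Unstable η M)
    (s1' : ¬ Unstable η' (M-1)) (s2' : ¬ Unstable η' M) :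
    ∀ t : ℕ, ∀ x ≤ M - 2*t, evolve ω η (t+1) x = evolve ω η' (t+1) x := by
  intro t
  induction t with
  | zero =>
    intro x hx
    exact update_agree_stable h s1 s2 s1' s2' x (by omega)
  | succ t ih =>
    intro x hx
    have := update_agree (ξ := evolve ω η (t+1)) (ξ' := evolve ω η' (t+1))
      (c := ω (t+1)) (M := M - 2*t) (fun y hy => ih y hy) x (by omega)
    exact this

lemma event_iff {η η' : Config} {k : ℕ} (hk : 1 ≤ k) {m : ℤ} (hm : 2*(k:ℤ) ≤ m)
    (h : ∀ x ≤ m, η x = η' x)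
    (s1 : ¬ Unstable η (m-1)) (s2 : ¬ Unstable η m)
    (s1' : ¬ Unstable η' (m-1)) (s2' : ¬ Unstable η' m) (ω : ℕ → ℤ → Bool) :
    Unstable (evolve ω η k) 0 ↔ Unstable (evolve ω η' k) 0 := by
  obtain ⟨t, rfl⟩ : ∃ t, k = t + 1 := ⟨k - 1, by omega⟩
  refine unstable_congr fun y hy1 hy2 => ?_
  exact evolve_agree h s1 s2 s1' s2' t y (by push_cast at hm ⊢; omega)

lemma stable_right_evolve {η : Config} {ω : ℕ → ℤ → Bool} {a : ℤ}
    (h : ∀ x, a ≤ x → ¬ Unstable η x) :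
    ∀ t : ℕ, ∀ x, a + 2*t ≤ x → ¬ Unstable (evolve ω η t) x := by
  intro t
  induction t with
  | zero => intro x hx; exact h x (by omega)
  | succ t ih =>
    intro x hx
    have hup : ∀ y, a + 2*t ≤ y → update (evolve ω η t) (ω t) y = evolve ω η t y := by
      intro y hy
      unfold update
      rw [if_neg (ih y hy)]
    have : Unstable (evolve ω η (t+1)) x ↔ Unstable (evolve ω η t) x := by
      show Unstable (update (evolve ω η t) (ω t)) x ↔ _
      exact unstable_congr fun y hy1 hy2 => hup y (by push_cast at hx ⊢; omega)
    exact fun hU => ih x (by push_cast at hx ⊢; omega) (this.mp hU)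
def reflect (η : Config) : Config := fun x => η (-x)

def coinReflect (ω : ℕ → ℤ → Bool) : ℕ → ℤ → Bool := fun j x => ω j (-x)

lemma unstable_reflect (η : Config) (x : ℤ) : Unstable (reflect η) x ↔ Unstable η (-x) := by
  unfold Unstable reflect
  rw [show -(x-2) = -x+2 by ring, show -(x-1) = -x+1 by ring,
    show -(x+1) = -x-1 by ring, show -(x+2) = -x-2 by ring]
  constructor
  · rintro (⟨h1,h2⟩|⟨h1,h2⟩|⟨h1,h2⟩)
    · exact Or.inr (Or.inr ⟨h2.symm, h1.symm⟩)
    · exact Or.inr (Or.inl ⟨h2.symm, h1.symm⟩)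
    · exact Or.inl ⟨h2.symm, h1.symm⟩
  · rintro (⟨h1,h2⟩|⟨h1,h2⟩|⟨h1,h2⟩)
    · exact Or.inr (Or.inr ⟨h2.symm, h1.symm⟩)
    · exact Or.inr (Or.inl ⟨h2.symm, h1.symm⟩)
    · exact Or.inl ⟨h2.symm, h1.symm⟩

lemma evolve_reflect (ω : ℕ → ℤ → Bool) (η : Config) :
    ∀ t, evolve ω (reflect η) t = reflect (evolve (coinReflect ω) η t) := by
  intro t
  induction t with
  | zero => rfl
  | succ t ih =>
    show update (evolve ω (reflect η) t) (ω t) = _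
    rw [ih]
    funext x
    show update (reflect (evolve (coinReflect ω) η t)) (ω t) x
      = update (evolve (coinReflect ω) η t) (coinReflect ω t) (-x)
    unfold update
    by_cases h : Unstable (evolve (coinReflect ω) η t) (-x)
    · rw [if_pos ((unstable_reflect _ _).mpr h), if_pos h]
      show ω t x = ω t (- - x)
      rw [neg_neg]
    · rw [if_neg (fun h' => h ((unstable_reflect _ _).mp h')), if_neg h]; rfl

lemma swindow_reflect {η : Config} {n m : ℕ∞} (h : SWindow η n m) : SWindow (reflect η) m n := by
  obtain ⟨h1, h2, h3⟩ := h
  refine ⟨fun i hi1 hi2 => ?_, fun nn hnn => ?_, fun mm hmm => ?_⟩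
  · rw [unstable_reflect]
    exact h1 (-i) (by rwa [neg_neg]) hi1
  · rw [unstable_reflect, show -(-(nn:ℤ)-1) = (nn:ℤ)+1 by ring]
    exact h3 nn hnn
  · rw [unstable_reflect, show -((mm:ℤ)+1) = -(mm:ℤ)-1 by ring]
    exact h2 mm hmm
lemma measurable_eval (j : ℕ) (x : ℤ) : Measurable fun ω : ℕ → ℤ → Bool => ω j x :=
  (measurable_pi_apply x).comp (measurable_pi_apply j)

lemma measurableSet_unstable {α : Type*} [MeasurableSpace α] {g : ℤ → α → Bool}
    (hg : ∀ y, Measurable (g y)) (x : ℤ) :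
    MeasurableSet {ω | Unstable (fun y => g y ω) x} := by
  have heq : ∀ a b : ℤ, MeasurableSet {ω | g a ω = g b ω} := fun a b =>
    measurableSet_eq_fun (hg a) (hg b)
  unfold Unstable
  exact (((heq _ _).inter (heq _ _)).union (((heq _ _).inter (heq _ _)).union
    ((heq _ _).inter (heq _ _))))

lemma measurable_evolve (η : Config) (k : ℕ) (x : ℤ) :
    Measurable fun ω : ℕ → ℤ → Bool => evolve ω η k x := by
  induction k generalizing x with
  | zero => exact measurable_const
  | succ k ih =>
    show Measurable fun ω => update (evolve ω η k) (ω k) x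
    unfold update
    exact Measurable.ite (measurableSet_unstable (fun y => ih y) x) (measurable_eval k x) (ih x)

lemma measurableSet_event (η : Config) (k : ℕ) :
    MeasurableSet {ω : ℕ → ℤ → Bool | Unstable (evolve ω η k) 0} :=
  measurableSet_unstable (fun y => measurable_evolve η k y) 0

lemma measurable_coinReflect : Measurable coinReflect := by
  apply measurable_pi_lambda
  intro j
  apply measurable_pi_lambda
  intro x
  exact measurable_eval j (-x)

def Cyl : Set (Set (ℕ → ℤ → Bool)) :=
  {s | ∃ (S : Finset (ℕ × ℤ)) (f : ℕ × ℤ → Bool), s = {ω | ∀ p ∈ S, ω p.1 p.2 = f p}}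

lemma measurableSet_cyl (S : Finset (ℕ × ℤ)) (f : ℕ × ℤ → Bool) :
    MeasurableSet {ω : ℕ → ℤ → Bool | ∀ p ∈ S, ω p.1 p.2 = f p} := by
  have : {ω : ℕ → ℤ → Bool | ∀ p ∈ S, ω p.1 p.2 = f p}
      = ⋂ p ∈ S, {ω : ℕ → ℤ → Bool | ω p.1 p.2 = f p} := by
    ext ω; simp
  rw [this]
  exact MeasurableSet.biInter S.countable_toSet
    (fun p _ => (measurable_eval p.1 p.2) (measurableSet_singleton (f p)))

lemma gen_eq : (inferInstance : MeasurableSpace (ℕ → ℤ → Bool))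
    = MeasurableSpace.generateFrom Cyl := by
  apply le_antisymm
  · show MeasurableSpace.pi ≤ _
    refine iSup_le fun j => ?_
    show MeasurableSpace.comap _ MeasurableSpace.pi ≤ _
    rw [show (MeasurableSpace.pi : MeasurableSpace (ℤ → Bool))
      = ⨆ x : ℤ, MeasurableSpace.comap (fun h : ℤ → Bool => h x) ⊤ from rfl,
      MeasurableSpace.comap_iSup]
    refine iSup_le fun x => ?_
    rw [MeasurableSpace.comap_comp]
    rintro t ⟨s, -, rfl⟩
    have hdec : ((fun h : ℤ → Bool => h x) ∘ fun ω : ℕ → ℤ → Bool => ω j) ⁻¹' s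
        = ⋃ b ∈ s, {ω : ℕ → ℤ → Bool | ω j x = b} := by
      ext ω; simp [Function.comp]
    rw [hdec]
    refine MeasurableSet.biUnion s.to_countable fun b _ => ?_
    apply MeasurableSpace.measurableSet_generateFrom
    refine ⟨{(j, x)}, fun _ => b, ?_⟩
    ext ω; simp
  · apply MeasurableSpace.generateFrom_le
    rintro s ⟨S, f, rfl⟩
    exact measurableSet_cyl S f

lemma isPiSystem_cyl : IsPiSystem Cyl := by
  rintro s ⟨S, f, rfl⟩ t ⟨T, g, rfl⟩ hne
  obtain ⟨ω0, hω0s, hω0t⟩ := hne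
  refine ⟨S ∪ T, fun p => if p ∈ S then f p else g p, ?_⟩
  ext ω
  simp only [Set.mem_inter_iff, Set.mem_setOf_eq, Finset.mem_union]
  constructor
  · rintro ⟨hs, ht⟩ p hp
    by_cases hpS : p ∈ S
    · rw [if_pos hpS]; exact hs p hpS
    · rw [if_neg hpS]; exact ht p (hp.resolve_left hpS)
  · intro h
    constructor
    · intro p hp
      have := h p (Or.inl hp)
      rwa [if_pos hp] at this
    · intro p hp
      have := h p (Or.inr hp)
      by_cases hpS : p ∈ S
      · rw [if_pos hpS] at this
        exact this.trans ((hω0s p hpS).symm.trans (hω0t p hp))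
      · rwa [if_neg hpS] at this

lemma map_coinReflect (μ : Measure (ℕ → ℤ → Bool)) [IsProbabilityMeasure μ]
    (hμ : IIDCoins μ) : Measure.map coinReflect μ = μ := by
  have : IsProbabilityMeasure (Measure.map coinReflect μ) :=
    Measure.isProbabilityMeasure_map measurable_coinReflect.aemeasurable
  apply ext_of_generate_finite Cyl gen_eq isPiSystem_cyl
  · rintro s ⟨S, f, rfl⟩
    rw [Measure.map_apply measurable_coinReflect (measurableSet_cyl S f)]
    have hρ : Function.Injective (fun p : ℕ × ℤ => (p.1, -p.2)) := by
      intro p q h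
      simp only [Prod.mk.injEq] at h
      exact Prod.ext h.1 (by omega)
    have hset : coinReflect ⁻¹' {ω | ∀ p ∈ S, ω p.1 p.2 = f p}
        = {ω | ∀ p ∈ S.image (fun p : ℕ × ℤ => (p.1, -p.2)), ω p.1 p.2
            = f (p.1, -p.2)} := by
      ext ω
      simp only [Set.mem_preimage, Set.mem_setOf_eq, Finset.mem_image]
      constructor
      · rintro h q ⟨p, hp, rfl⟩
        have := h p hp
        simpa [coinReflect] using this
      · intro h p hp
        have := h (p.1, -p.2) ⟨p, hp, rfl⟩
        simp only [neg_neg] at this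
        simpa [coinReflect] using this
    rw [hset, hμ (S.image _) (fun p => f (p.1, -p.2)), hμ S f,
      Finset.card_image_of_injective S hρ]
  · simp
lemma measure_event_reflect (μ : Measure (ℕ → ℤ → Bool)) [IsProbabilityMeasure μ]
    (hμ : IIDCoins μ) (η : Config) (k : ℕ) :
    μ {ω | Unstable (evolve ω (reflect η) k) 0} = μ {ω | Unstable (evolve ω η k) 0} := by
  have hset : {ω | Unstable (evolve ω (reflect η) k) 0}
      = coinReflect ⁻¹' {ω | Unstable (evolve ω η k) 0} := by
    ext ω
    simp only [Set.mem_setOf_eq, Set.mem_preimage]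
    rw [evolve_reflect]
    rw [unstable_reflect, neg_zero]
  rw [hset, ← Measure.map_apply measurable_coinReflect (measurableSet_event η k),
    map_coinReflect μ hμ]

lemma pS_symm (μ : Measure (ℕ → ℤ → Bool)) [IsProbabilityMeasure μ]
    (hμ : IIDCoins μ) (k : ℕ) (n m : ℕ∞) : pS μ k n m = pS μ k m n := by
  have key : ∀ a b : ℕ∞, pS μ k a b ≤ pS μ k b a := by
    intro a b
    refine iSup₂_le fun η hη => ?_
    have h1 : SWindow (reflect η) b a := swindow_reflect hη
    have h2 : μ {ω | Unstable (evolve ω η k) 0}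
        = μ {ω | Unstable (evolve ω (reflect η) k) 0} :=
      (measure_event_reflect μ hμ η k).symm
    rw [h2]
    exact le_iSup₂ (f := fun (η' : Config) (_ : SWindow η' b a) =>
      μ {ω | Unstable (evolve ω η' k) 0}) (reflect η) h1
  exact le_antisymm (key n m) (key m n)
lemma stable_of_left {v η : Config} {m : ℤ} (hagree : ∀ x ≤ m, v x = η x)
    (hne : v m ≠ v (m+1)) {i : ℤ} (hi : i ≤ m) (hstab : ¬ Unstable η i) :
    ¬ Unstable v i := by
  rcases lt_or_ge i (m - 1) with hlt | hge
  · rw [unstable_congr (ξ' := η) (fun y hy1 hy2 => hagree y (by omega))]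
    exact hstab
  · rcases eq_or_lt_of_le hge with heq | hlt2
    · -- i = m - 1
      rintro (⟨a, b⟩ | ⟨a, b⟩ | ⟨a, b⟩)
      · exact hstab (Or.inl ⟨by rw [← hagree _ (by omega), ← hagree _ (by omega)]; exact a,
          by rw [← hagree _ (by omega), ← hagree _ (by omega)]; exact b⟩)
      · exact hstab (Or.inr (Or.inl ⟨by rw [← hagree _ (by omega), ← hagree _ (by omega)]; exact a,
          by rw [← hagree _ (by omega), ← hagree _ (by omega)]; exact b⟩))
      · apply hne
        rw [show m = i + 1 by omega, show i + 1 + 1 = i + 2 by ring]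
        exact b
    · have : i = m := by omega
      subst this
      rintro (⟨a, b⟩ | ⟨a, b⟩ | ⟨a, b⟩)
      · exact hstab (Or.inl ⟨by rw [← hagree _ (by omega), ← hagree _ (by omega)]; exact a,
          by rw [← hagree _ (by omega), ← hagree _ (by omega)]; exact b⟩)
      · exact hne b
      · exact hne a

def extAlt (η : Config) (m : ℤ) : Config :=
  fun x => if x ≤ m then η x else if (x - m) % 2 = 0 then η m else !(η m)

lemma extAlt_ne (η : Config) (m : ℤ) (j : ℤ) (hj : m ≤ j) :
    extAlt η m j ≠ extAlt η m (j+1) := by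
  unfold extAlt
  by_cases hjm : j = m
  · subst hjm
    rw [if_pos (le_refl j), if_neg (show ¬(j+1 ≤ j) by omega),
      if_neg (show ¬((j+1-j) % 2 = 0) by omega)]
    simp
  · rw [if_neg (show ¬(j ≤ m) by omega), if_neg (show ¬(j+1 ≤ m) by omega)]
    by_cases hc : (j - m) % 2 = 0
    · rw [if_pos hc, if_neg (show ¬((j+1-m) % 2 = 0) by omega)]
      simp
    · rw [if_neg hc, if_pos (show (j+1-m) % 2 = 0 by omega)]
      simp

def extMono (η : Config) (m : ℤ) : Config :=
  fun x => if x ≤ m then η x else !(η m)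

lemma hleft_triv {n : ℕ∞} : ∀ i : ℤ, 0 ≤ i → (((-i).toNat : ℕ∞)) ≤ n := by
  intro i hi
  rw [Int.toNat_of_nonpos (by omega)]
  simp

lemma cast_toNat_le {a : ℕ} {i : ℤ} (hi : i ≤ (a : ℤ)) : ((i.toNat : ℕ∞) ≤ (a : ℕ∞)) := by
  exact_mod_cast Int.toNat_le.mpr hi

lemma le_of_cast_toNat {a : ℕ} {i : ℤ} (h : ((i.toNat : ℕ∞) ≤ (a : ℕ∞))) : i ≤ (a : ℤ) := by
  rw [Nat.cast_le] at h
  omega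

lemma swindow_extAlt {η : Config} {n : ℕ∞} {m : ℕ} (h : SWindow η n (m : ℕ∞)) (hm : 2 ≤ m) :
    SWindow (extAlt η (m : ℤ)) n ⊤ := by
  obtain ⟨h1, h2, h3⟩ := h
  have hagree : ∀ x ≤ (m : ℤ), extAlt η (m : ℤ) x = η x := fun x hx => if_pos hx
  have hne : ∀ j, (m : ℤ) ≤ j → ¬ (extAlt η (m:ℤ) j = extAlt η (m:ℤ) (j+1)) :=
    fun j hj => extAlt_ne η (m:ℤ) j hj
  refine ⟨fun i hi1 _ => ?_, fun nn hnn => ?_, fun mm hmm => ?_⟩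
  · rcases le_or_gt i (m : ℤ) with hi | hi
    · exact stable_of_left hagree (hne (m:ℤ) le_rfl) hi
        (h1 i hi1 (cast_toNat_le hi))
    · rintro (⟨a, b⟩ | ⟨a, b⟩ | ⟨a, b⟩)
      · apply hne (i - 1) (by omega)
        rw [show i - 1 + 1 = i by ring]; exact b
      · apply hne (i - 1) (by omega)
        rw [show i - 1 + 1 = i by ring]; exact a
      · exact hne i (by omega) a
  · have := h2 nn hnn
    rw [unstable_congr (ξ' := η) (fun y hy1 hy2 => hagree y (by omega))]
    exact this
  · exact absurd hmm.symm (by simp)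

lemma swindow_extMono {η' : Config} {n : ℕ∞} {m : ℕ} (h : SWindow η' n ⊤) (hm : 2 ≤ m) :
    SWindow (extMono η' (m : ℤ)) n (m : ℕ∞) := by
  obtain ⟨h1, h2, h3⟩ := h
  have hagree : ∀ x ≤ (m : ℤ), extMono η' (m : ℤ) x = η' x := fun x hx => if_pos hx
  have hne : extMono η' (m:ℤ) (m:ℤ) ≠ extMono η' (m:ℤ) ((m:ℤ)+1) := by
    unfold extMono
    rw [if_pos le_rfl, if_neg (by omega)]
    simp
  refine ⟨fun i hi1 hi2 => ?_, fun nn hnn => ?_, fun mm hmm => ?_⟩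
  · exact stable_of_left hagree hne (le_of_cast_toNat hi2) (h1 i hi1 le_top)
  · have := h2 nn hnn
    rw [unstable_congr (ξ' := η') (fun y hy1 hy2 => hagree y (by omega))]
    exact this
  · have hmmm : (mm:ℤ) = (m:ℤ) := by exact_mod_cast hmm.symm
    rw [hmmm]
    refine Or.inr (Or.inr ⟨?_, ?_⟩)
    · show extMono η' (m:ℤ) ((m:ℤ)+1) = extMono η' (m:ℤ) ((m:ℤ)+1+1)
      unfold extMono
      rw [if_neg (show ¬((m:ℤ)+1 ≤ (m:ℤ)) by omega),
        if_neg (show ¬((m:ℤ)+1+1 ≤ (m:ℤ)) by omega)]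
    · show extMono η' (m:ℤ) ((m:ℤ)+1+1) = extMono η' (m:ℤ) ((m:ℤ)+1+2)
      unfold extMono
      rw [if_neg (show ¬((m:ℤ)+1+1 ≤ (m:ℤ)) by omega),
        if_neg (show ¬((m:ℤ)+1+2 ≤ (m:ℤ)) by omega)]

lemma pS_trunc (μ : Measure (ℕ → ℤ → Bool)) (k : ℕ) (hk : 1 ≤ k) {m : ℕ}
    (hm : 2 * k ≤ m) (n : ℕ∞) : pS μ k n (m : ℕ∞) = pS μ k n ⊤ := by
  have hm2 : 2 ≤ m := by omega
  have hmz : 2 * (k:ℤ) ≤ (m:ℤ) := by exact_mod_cast hm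
  apply le_antisymm
  · refine iSup₂_le fun η hη => ?_
    have hw : SWindow (extAlt η (m:ℤ)) n ⊤ := swindow_extAlt hη hm2
    have hsη : ∀ i : ℤ, 0 ≤ i → i ≤ (m:ℤ) → ¬ Unstable η i := fun i hi0 hi =>
      hη.1 i (hleft_triv i hi0) (cast_toNat_le hi)
    have hsv : ∀ i : ℤ, 0 ≤ i → ¬ Unstable (extAlt η (m:ℤ)) i := fun i hi0 =>
      hw.1 i (hleft_triv i hi0) le_top
    have hev : {ω | Unstable (evolve ω η k) 0} = {ω | Unstable (evolve ω (extAlt η (m:ℤ)) k) 0} := by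
      ext ω
      exact event_iff hk hmz (fun x hx => (if_pos hx).symm)
        (hsη _ (by omega) (by omega)) (hsη _ (by omega) le_rfl)
        (hsv _ (by omega)) (hsv _ (by omega)) ω
    rw [hev]
    exact le_iSup₂ (f := fun (η' : Config) (_ : SWindow η' n ⊤) =>
      μ {ω | Unstable (evolve ω η' k) 0}) (extAlt η (m:ℤ)) hw
  · refine iSup₂_le fun η' hη' => ?_
    have hw : SWindow (extMono η' (m:ℤ)) n (m : ℕ∞) := swindow_extMono hη' hm2
    have hsη' : ∀ i : ℤ, 0 ≤ i → ¬ Unstable η' i := fun i hi0 =>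
      hη'.1 i (hleft_triv i hi0) le_top
    have hsv : ∀ i : ℤ, 0 ≤ i → i ≤ (m:ℤ) → ¬ Unstable (extMono η' (m:ℤ)) i := fun i hi0 hi =>
      hw.1 i (hleft_triv i hi0) (cast_toNat_le hi)
    have hev : {ω | Unstable (evolve ω η' k) 0}
        = {ω | Unstable (evolve ω (extMono η' (m:ℤ)) k) 0} := by
      ext ω
      exact (event_iff hk hmz (fun x hx => if_pos hx)
        (hsv _ (by omega) (by omega)) (hsv _ (by omega) le_rfl)
        (hsη' _ (by omega)) (hsη' _ (by omega)) ω).symm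
    rw [hev]
    exact le_iSup₂ (f := fun (ξ : Config) (_ : SWindow ξ n (m : ℕ∞)) =>
      μ {ω | Unstable (evolve ω ξ k) 0}) (extMono η' (m:ℤ)) hw

lemma pS_top_zero (μ : Measure (ℕ → ℤ → Bool)) (k : ℕ) {n : ℕ}
    (hn : 2 * k ≤ n) : pS μ k (n : ℕ∞) ⊤ = 0 := by
  apply le_antisymm _ zero_le
  refine iSup₂_le fun η hη => ?_
  have hstab : ∀ x : ℤ, -(n:ℤ) ≤ x → ¬ Unstable η x := by
    intro x hx
    refine hη.1 x ?_ le_top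
    exact cast_toNat_le (by omega)
  have : {ω : ℕ → ℤ → Bool | Unstable (evolve ω η k) 0} = ∅ := by
    ext ω
    simp only [Set.mem_setOf_eq, Set.mem_empty_iff_false, iff_false]
    exact stable_right_evolve hstab k 0 (by omega)
  rw [this, measure_empty]

/-- `Σ_{i=1}^{∞} p_k^S(i-1, ∞) = (1/2) Σ_{i=1}^{4k} p_k^S(i-1, 4k-i)`; in
particular the series has finitely many nonzero terms, since `p_k^S(i-1, ∞) = 0` for `i > 2k`. -/
theorem pS_unbounded_sum (μ : Measure (ℕ → ℤ → Bool)) [IsProbabilityMeasure μ]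
    (hμ : IIDCoins μ) (k : ℕ) (hk : 1 ≤ k) :
    (∑' i : ℕ, pS μ k ((i : ℕ) : ℕ∞) ⊤ =
      (1 / 2 : ℝ≥0∞) * ∑ i ∈ Finset.Icc 1 (4 * k), pS μ k ((i - 1 : ℕ) : ℕ∞) ((4 * k - i : ℕ) : ℕ∞)) ∧
    (∀ i : ℕ, 2 * k < i → pS μ k ((i - 1 : ℕ) : ℕ∞) ⊤ = 0) := by
  have part2 : ∀ i : ℕ, 2 * k < i → pS μ k ((i - 1 : ℕ) : ℕ∞) ⊤ = 0 := by
    intro i hi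
    exact pS_top_zero μ k (by omega)
  refine ⟨?_, part2⟩
  have hLHS : ∑' i : ℕ, pS μ k ((i : ℕ) : ℕ∞) ⊤
      = ∑ j ∈ Finset.range (2*k), pS μ k ((j : ℕ) : ℕ∞) ⊤ := by
    apply tsum_eq_sum
    intro b hb
    rw [Finset.mem_range, not_lt] at hb
    exact pS_top_zero μ k hb
  have hterm : ∀ i ∈ Finset.Icc 1 (4*k),
      pS μ k ((i - 1 : ℕ) : ℕ∞) ((4 * k - i : ℕ) : ℕ∞)
        = if i ≤ 2*k then pS μ k ((i-1 : ℕ) : ℕ∞) ⊤ else pS μ k ((4*k-i : ℕ) : ℕ∞) ⊤ := by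
    intro i hi
    simp only [Finset.mem_Icc] at hi
    by_cases h2 : i ≤ 2*k
    · rw [if_pos h2]
      exact pS_trunc μ k hk (by omega) _
    · rw [if_neg h2, pS_symm μ hμ k]
      exact pS_trunc μ k hk (by omega) _
  have hR : ∑ i ∈ Finset.Icc 1 (4*k), pS μ k ((i - 1 : ℕ) : ℕ∞) ((4 * k - i : ℕ) : ℕ∞)
      = ∑ i ∈ Finset.Icc 1 (4*k),
        (if i ≤ 2*k then pS μ k ((i-1 : ℕ) : ℕ∞) ⊤ else pS μ k ((4*k-i : ℕ) : ℕ∞) ⊤) :=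
    Finset.sum_congr rfl hterm
  have hsplit : ∑ i ∈ Finset.Icc 1 (4*k),
      (if i ≤ 2*k then pS μ k ((i-1 : ℕ) : ℕ∞) ⊤ else pS μ k ((4*k-i : ℕ) : ℕ∞) ⊤)
      = (∑ j ∈ Finset.range (2*k), pS μ k ((j : ℕ) : ℕ∞) ⊤)
        + (∑ j ∈ Finset.range (2*k), pS μ k ((j : ℕ) : ℕ∞) ⊤) := by
    rw [← Finset.Ico_add_one_right_eq_Icc,
      ← Finset.sum_Ico_consecutive _ (by omega : 1 ≤ 2*k+1) (by omega : 2*k+1 ≤ 4*k+1)]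
    congr 1
    · rw [Finset.sum_Ico_eq_sum_range, show 2*k+1-1 = 2*k by omega]
      apply Finset.sum_congr rfl
      intro j hj
      rw [Finset.mem_range] at hj
      rw [if_pos (by omega)]
      congr 1
      exact Nat.cast_inj.mpr (by omega)
    · rw [Finset.sum_Ico_eq_sum_range, show 4*k+1-(2*k+1) = 2*k by omega]
      have : ∀ j ∈ Finset.range (2*k),
          (if 2*k+1+j ≤ 2*k then pS μ k ((2*k+1+j-1 : ℕ) : ℕ∞) ⊤
            else pS μ k ((4*k-(2*k+1+j) : ℕ) : ℕ∞) ⊤)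
          = pS μ k ((2*k-1-j : ℕ) : ℕ∞) ⊤ := by
        intro j hj
        rw [Finset.mem_range] at hj
        rw [if_neg (by omega)]
        congr 1
        exact Nat.cast_inj.mpr (by omega)
      rw [Finset.sum_congr rfl this,
        Finset.sum_range_reflect (fun j => pS μ k ((j : ℕ) : ℕ∞) ⊤) (2*k)]
  rw [hLHS, hR, hsplit, ← two_mul, one_div, ← mul_assoc,
    ENNReal.inv_mul_cancel two_ne_zero ENNReal.ofNat_ne_top, one_mul]
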